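/- For all x < 0 and t ∈ [0, 1], exp(−x²·φ(x·t)) ≤ exp(2x + 2), where φ(z) = 2(e^z − 1 − z)/z² and φ(0) = 1. -/

import Mathlib

noncomputable def φ (z : ℝ) : ℝ :=
  if z = 0 then 1 else 2 * (Real.exp z - 1 - z) / z ^ 2

lemma key_exp_ineq (x t : ℝ) (hx : x < 0) (ht0 : 0 < t) (ht1 : t ≤ 1) :
    1 + x * t - (x + 1) * t ^ 2 ≤ Real.exp (x * t) := by
  rcases eq_or_lt_of_le ht1 with h1 | h1
  · subst h1
    have := Real.exp_pos (x * 1)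
    nlinarith
  · have h1t : (0:ℝ) < 1 - t := by linarith
    have hlog : Real.log (1 - t) ≤ (1 - t) - 1 := Real.log_le_sub_one_of_pos h1t
    have ha : 1 + (x * t - Real.log (1 - t)) ≤ Real.exp (x * t - Real.log (1 - t)) := by
      linarith [Real.add_one_le_exp (x * t - Real.log (1 - t))]
    have he : Real.exp (x * t - Real.log (1 - t)) = Real.exp (x * t) / (1 - t) := by
      rw [Real.exp_sub, Real.exp_log h1t]
    rw [he, le_div_iff₀ h1t] at ha
    have hL : t ≤ -Real.log (1 - t) := by linarith
    nlinarith [mul_nonneg (sub_nonneg.mpr hL) (le_of_lt h1t)]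

theorem integrand_bound_neg (x t : ℝ) (hx : x < 0) (ht : t ∈ Set.Icc (0:ℝ) 1) :
    Real.exp (-(x ^ 2 * φ (x * t))) ≤ Real.exp (2 * x + 2) := by
  obtain ⟨ht0, ht1⟩ := ht
  apply Real.exp_le_exp.mpr
  rcases eq_or_lt_of_le ht0 with h0 | h0
  · subst h0
    simp [φ]
    nlinarith
  · have hz : x * t ≠ 0 := by
      have := mul_neg_of_neg_of_pos hx h0
      linarith
    rw [φ, if_neg hz]
    have hkey := key_exp_ineq x t hx h0 ht1
    have ht2 : (0:ℝ) < t ^ 2 := by positivity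
    have hx2 : (0:ℝ) < x ^ 2 := by nlinarith
    have hcalc : x ^ 2 * (2 * (Real.exp (x * t) - 1 - x * t) / (x * t) ^ 2)
        = 2 * (Real.exp (x * t) - 1 - x * t) / t ^ 2 := by
      have hx0 : x ≠ 0 := hx.ne
      have ht0' : t ≠ 0 := h0.ne'
      field_simp
    rw [hcalc]
    have : -(2 * x + 2) ≤ 2 * (Real.exp (x * t) - 1 - x * t) / t ^ 2 := by
      rw [le_div_iff₀ ht2]
      nlinarith
    linarith
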